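/- Let G be a finite non-solvable group and x ∈ G such that the subgroup M generated by nil_G(x) is a maximal subgroup of G. Suppose the hypercenter Z*(G) of G is nontrivial and Z*(G) ≤ M. Then the cardinality of nil_G(x) is not equal to p³ for any prime p. -/

import Mathlib

/-- The nilpotentizer of `x` in `G`: the set of `y` such that `⟨x, y⟩` is nilpotent. -/
def nilpotentizer {G : Type*} [Group G] (x : G) : Set G :=
  {y | Group.IsNilpotent (Subgroup.closure ({x, y} : Set G))}

/-- The hypercenter of `G`: the terminal term of the upper central series of `G`
(for a finite group the series is eventually constant, so this supremum is
the stable value). -/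
def hypercenter (G : Type*) [Group G] : Subgroup G :=
  ⨆ n : ℕ, upperCentralSeries G n

open Subgroup Pointwise

section AuxAll

variable {H : Type*} [Group H]



variable {H : Type*} [Group H]

lemma isNilpotent_of_le {K L : Subgroup H} (h : K ≤ L) (hL : Group.IsNilpotent L) :
    Group.IsNilpotent K := by
  haveI := hL
  exact nilpotent_of_mulEquiv (Subgroup.subgroupOfEquivOfLe h)

lemma closure_pair_le {x y : H} {K : Subgroup H} (hx : x ∈ K) (hy : y ∈ K) :
    closure ({x, y} : Set H) ≤ K := by
  rw [closure_le]; rintro z (rfl | rfl) <;> assumption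

lemma coe_subset_nilpotentizer {x : H} {K : Subgroup H} (hx : x ∈ K)
    (hK : Group.IsNilpotent K) : (K : Set H) ⊆ nilpotentizer x :=
  fun _ hy => isNilpotent_of_le (closure_pair_le hx hy) hK

lemma zpowers_isNilpotent (x : H) : Group.IsNilpotent (zpowers x) := by
  refine ⟨1, ?_⟩
  rw [Subgroup.upperCentralSeries_one, eq_top_iff]
  intro g _
  rw [Subgroup.mem_center_iff]
  rintro ⟨_, i, rfl⟩
  obtain ⟨gg, j, rfl⟩ := g
  exact Subtype.ext (Commute.zpow_zpow (Commute.refl x) i j)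

lemma zpowers_subset_nilpotentizer (x : H) : (zpowers x : Set H) ⊆ nilpotentizer x :=
  coe_subset_nilpotentizer (mem_zpowers x) (zpowers_isNilpotent x)

lemma self_mem_nilpotentizer (x : H) : x ∈ nilpotentizer x :=
  zpowers_subset_nilpotentizer x (mem_zpowers x)

lemma nilpotentizer_one : nilpotentizer (1 : H) = Set.univ := by
  ext y
  simp only [Set.mem_univ, iff_true]
  exact isNilpotent_of_le (closure_pair_le (one_mem _) (mem_zpowers y)) (zpowers_isNilpotent y)

lemma mul_mem_nilpotentizer {x y t : H} (hy : y ∈ nilpotentizer x) (ht : t ∈ zpowers x) :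
    y * t ∈ nilpotentizer x := by
  refine isNilpotent_of_le (K := closure {x, y * t}) (closure_pair_le ?_ ?_) hy
  · exact subset_closure (Set.mem_insert _ _)
  · exact mul_mem (subset_closure (Set.mem_insert_iff.mpr (Or.inr rfl)))
      ((zpowers_le.mpr (subset_closure (Set.mem_insert _ _))) ht)
variable {H : Type*} [Group H] [Finite H]

lemma card_dvd_of_mul_closed (T : Subgroup H) (S : Set H)
    (hS : ∀ y ∈ S, ∀ t ∈ T, y * t ∈ S) : Nat.card T ∣ Nat.card S := by
  have hpre : (QuotientGroup.mk (s := T) ⁻¹' ((QuotientGroup.mk (s := T)) '' S) : Set H) = S := by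
    ext y'
    constructor
    · rintro ⟨y, hy, hyy⟩
      have h1 : y⁻¹ * y' ∈ T := (QuotientGroup.eq (s := T)).mp hyy
      have := hS y hy _ h1
      simpa [mul_assoc] using this
    · intro h
      exact ⟨y', h, rfl⟩
  have hcard := Nat.card_congr
    (QuotientGroup.preimageMkEquivSubgroupProdSet T ((QuotientGroup.mk (s := T)) '' S))
  rw [hpre, Nat.card_prod] at hcard
  exact ⟨_, hcard⟩
variable {H : Type*} [Group H]

lemma map_closure_pair {H' : Type*} [Group H'] (f : H →* H') (x y : H) :
    Subgroup.map f (closure ({x, y} : Set H)) = closure ({f x, f y} : Set H') := by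
  rw [MonoidHom.map_closure, Set.image_pair]

lemma nilpotentizer_preimage_center (x : H) :
    (QuotientGroup.mk (s := Subgroup.center H)) ⁻¹'
      (nilpotentizer (QuotientGroup.mk (s := Subgroup.center H) x)) = nilpotentizer x := by
  ext y
  simp only [Set.mem_preimage, nilpotentizer, Set.mem_setOf_eq]
  set N := Subgroup.center H
  set K := closure ({x, y} : Set H) with hK
  have hrange : ((QuotientGroup.mk' N).comp K.subtype).range
      = closure ({QuotientGroup.mk (s := N) x, QuotientGroup.mk (s := N) y} : Set (H ⧸ N)) := by
    rw [MonoidHom.range_comp, Subgroup.range_subtype, hK, map_closure_pair,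
      QuotientGroup.mk'_apply, QuotientGroup.mk'_apply]
  constructor
  · intro hnil
    have hker : ((QuotientGroup.mk' N).comp K.subtype).rangeRestrict.ker ≤ Subgroup.center K := by
      rw [MonoidHom.ker_rangeRestrict]
      intro g hg
      have hgc : (g : H) ∈ N := by
        have : QuotientGroup.mk' N (g : H) = 1 := hg
        rwa [← MonoidHom.mem_ker, QuotientGroup.ker_mk'] at this
      rw [Subgroup.mem_center_iff]
      intro k
      exact Subtype.ext ((Subgroup.mem_center_iff.mp hgc) k)
    refine @_root_.isNilpotent_of_ker_le_center _ _ _ _ _ hker ?_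
    rw [← hrange] at hnil
    exact hnil
  · intro hnil
    rw [← hrange]
    exact nilpotent_of_surjective (h := hnil) _ ((QuotientGroup.mk' N).comp K.subtype).rangeRestrict_surjective

lemma nilpotentizer_image_center (x : H) :
    (QuotientGroup.mk (s := Subgroup.center H)) '' (nilpotentizer x)
      = nilpotentizer (QuotientGroup.mk (s := Subgroup.center H) x) := by
  conv_lhs => rw [← nilpotentizer_preimage_center x]
  exact Set.image_preimage_eq _ (QuotientGroup.mk_surjective)

lemma isCoatom_map_quotient {N M : Subgroup H} [N.Normal] (hNM : N ≤ M) (h : IsCoatom M) :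
    IsCoatom (Subgroup.map (QuotientGroup.mk' N) M) := by
  constructor
  · intro htop
    apply h.1
    have : Subgroup.comap (QuotientGroup.mk' N) (Subgroup.map (QuotientGroup.mk' N) M) = ⊤ := by
      rw [htop, Subgroup.comap_top]
    rwa [Subgroup.comap_map_eq_self (by rwa [QuotientGroup.ker_mk'])] at this
  · intro X hX
    have hMc : M ≤ Subgroup.comap (QuotientGroup.mk' N) X := by
      refine le_trans ?_ (Subgroup.comap_mono hX.le)
      rw [Subgroup.comap_map_eq_self (by rwa [QuotientGroup.ker_mk'])]
    have hlt : M < Subgroup.comap (QuotientGroup.mk' N) X := by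
      rcases hMc.lt_or_eq with h1 | h1
      · exact h1
      · exfalso
        apply hX.ne
        rw [h1, Subgroup.map_comap_eq_self_of_surjective QuotientGroup.mk_surjective]
    have := h.2 _ hlt
    have : X = ⊤ := by
      rw [← Subgroup.map_comap_eq_self_of_surjective (f := QuotientGroup.mk' N)
        QuotientGroup.mk_surjective X, this]
      exact Subgroup.map_top_of_surjective _ QuotientGroup.mk_surjective
    exact this

lemma isSolvable_of_normal_of_quotient {N : Subgroup H} [N.Normal]
    (h1 : IsSolvable N) (h2 : IsSolvable (H ⧸ N)) : IsSolvable H := by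
  haveI : Group.IsSolvable N := h1; haveI : Group.IsSolvable (H ⧸ N) := h2
  exact solvable_of_ker_le_range N.subtype (QuotientGroup.mk' N)
    (by rw [QuotientGroup.ker_mk', Subgroup.range_subtype])

lemma center_le_hypercenter : Subgroup.center H ≤ hypercenter H := by
  rw [← Subgroup.upperCentralSeries_one]
  exact le_iSup (Subgroup.upperCentralSeries H) 1

lemma center_ne_bot_of_hypercenter (h : hypercenter H ≠ ⊥) : Subgroup.center H ≠ ⊥ := by
  intro hc
  apply h
  have hall : ∀ n, Subgroup.upperCentralSeries H n = ⊥ := by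
    intro n
    induction n with
    | zero => exact Subgroup.upperCentralSeries_zero H
    | succ n ih =>
      rw [eq_bot_iff]
      intro g hg
      rw [Subgroup.mem_upperCentralSeries_succ_iff] at hg
      have : g ∈ Subgroup.center H := by
        rw [Subgroup.mem_center_iff]
        intro y
        have := hg y
        rw [ih, Subgroup.mem_bot] at this
        have h1 : g * y * g⁻¹ = y := by
          have := mul_eq_one_iff_eq_inv.mp this
          rw [this]; group
        calc y * g = (g * y * g⁻¹) * g := by rw [h1]
          _ = g * y := by group
      rw [hc] at this
      exact this
  rw [hypercenter, iSup_eq_bot]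
  exact hall
variable {Γ : Type*} [Group Γ]

lemma subgroup_eq_of_le_of_card_le [Finite Γ] {K L : Subgroup Γ} (h : K ≤ L)
    (hc : Nat.card L ≤ Nat.card K) : K = L :=
  SetLike.ext' (Set.eq_of_subset_of_ncard_le h
    (by rwa [← Nat.card_coe_set_eq, ← Nat.card_coe_set_eq]) (Set.toFinite _))

/-- primary decomposition of an element wrt a prime q -/
lemma exists_primary_decomp [Finite Γ] (b : Γ) {q : ℕ} (hq : q.Prime) :
    ∃ u v : Γ, b = u * v ∧ u ∈ zpowers b ∧ v ∈ zpowers b ∧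
      orderOf u ∣ q ^ (orderOf b).factorization q ∧
      orderOf v ∣ (orderOf b) / q ^ (orderOf b).factorization q := by
  have hb : orderOf b ≠ 0 := (orderOf_pos b).ne'
  have hnm : q ^ (orderOf b).factorization q * (orderOf b / q ^ (orderOf b).factorization q)
      = orderOf b := Nat.ordProj_mul_ordCompl_eq_self (orderOf b) q
  have hcop : Nat.Coprime (q ^ (orderOf b).factorization q)
      (orderOf b / q ^ (orderOf b).factorization q) :=
    Nat.Coprime.pow_left _ (Nat.coprime_ordCompl hq hb)
  have hicop : IsCoprime ((q ^ (orderOf b).factorization q : ℕ) : ℤ)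
      ((orderOf b / q ^ (orderOf b).factorization q : ℕ) : ℤ) := by
    rw [Int.isCoprime_iff_gcd_eq_one]
    exact_mod_cast hcop
  obtain ⟨c, d, hcd⟩ := hicop
  set A : ℤ := ((q ^ (orderOf b).factorization q : ℕ) : ℤ) with hA
  set B : ℤ := ((orderOf b / q ^ (orderOf b).factorization q : ℕ) : ℤ) with hB
  have hABn : A * B = ((orderOf b : ℕ) : ℤ) := by rw [hA, hB, ← Nat.cast_mul, hnm]
  refine ⟨b ^ (d * B), b ^ (c * A), ?_, zpow_mem (mem_zpowers b) _,
    zpow_mem (mem_zpowers b) _, ?_, ?_⟩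
  · have hexp : d * B + c * A = (1 : ℤ) := by linear_combination hcd
    rw [← zpow_add, hexp, zpow_one]
  · rw [orderOf_dvd_iff_pow_eq_one, ← zpow_natCast, ← zpow_mul, ← hA]
    have h2 : d * B * A = ((orderOf b : ℕ) : ℤ) * d := by rw [← hABn]; ring
    rw [h2, zpow_mul, zpow_natCast, pow_orderOf_eq_one, one_zpow]
  · rw [orderOf_dvd_iff_pow_eq_one, ← zpow_natCast, ← zpow_mul, ← hB]
    have h2 : c * A * B = ((orderOf b : ℕ) : ℤ) * c := by rw [← hABn]; ring
    rw [h2, zpow_mul, zpow_natCast, pow_orderOf_eq_one, one_zpow]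

/-- in a finite nilpotent group, elements of prime power orders for distinct primes commute -/
lemma commute_of_prime_pow_orders [Finite Γ] (hnil : Group.IsNilpotent Γ)
    {p q : ℕ} (hp : p.Prime) (hq : q.Prime) (hpq : p ≠ q) {a u : Γ}
    (ha : ∃ i, orderOf a = p ^ i) (hu : ∃ j, orderOf u = q ^ j) :
    Commute a u := by
  haveI : Fact p.Prime := ⟨hp⟩
  haveI : Fact q.Prime := ⟨hq⟩
  have hsylnormal := (isNilpotent_of_finite_tfae (G := Γ)).out 0 3
  have hnorm : ∀ (r : ℕ) (_ : Fact r.Prime) (P : Sylow r Γ), (P : Subgroup Γ).Normal :=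
    hsylnormal.mp hnil
  obtain ⟨i, hi⟩ := ha
  obtain ⟨j, hj⟩ := hu
  have hpa : IsPGroup p (zpowers a) := IsPGroup.of_card (by rw [Nat.card_zpowers, hi])
  have hpu : IsPGroup q (zpowers u) := IsPGroup.of_card (by rw [Nat.card_zpowers, hj])
  obtain ⟨A, hA⟩ := hpa.exists_le_sylow
  obtain ⟨B, hB⟩ := hpu.exists_le_sylow
  haveI hAn : (A : Subgroup Γ).Normal := hnorm p ⟨hp⟩ A
  haveI hBn : (B : Subgroup Γ).Normal := hnorm q ⟨hq⟩ B
  have haA : a ∈ (A : Subgroup Γ) := hA (mem_zpowers a)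
  have huB : u ∈ (B : Subgroup Γ) := hB (mem_zpowers u)
  have hcommutator : a * u * a⁻¹ * u⁻¹ ∈ (A : Subgroup Γ) ⊓ (B : Subgroup Γ) := by
    constructor
    · have h1 : a * (u * a⁻¹ * u⁻¹) ∈ (A : Subgroup Γ) :=
        mul_mem haA (hAn.conj_mem a⁻¹ (inv_mem haA) u)
      have : a * u * a⁻¹ * u⁻¹ = a * (u * a⁻¹ * u⁻¹) := by group
      rwa [this]
    · have h1 : (a * u * a⁻¹) * u⁻¹ ∈ (B : Subgroup Γ) :=
        mul_mem (hBn.conj_mem u huB a) (inv_mem huB)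
      exact h1
  have hdisj : (A : Subgroup Γ) ⊓ (B : Subgroup Γ) = ⊥ := by
    rw [← disjoint_iff]
    exact IsPGroup.disjoint_of_ne p q hpq _ _ A.isPGroup' B.isPGroup'
  rw [hdisj, Subgroup.mem_bot, mul_inv_eq_one] at hcommutator
  unfold Commute SemiconjBy
  calc a * u = (a * u * a⁻¹) * a := by group
    _ = u * a := by rw [hcommutator]

/-- In a finite nilpotent group, a p-element commutes with every element of order prime to p. -/
lemma commute_of_pgroup_coprime [Finite Γ] (hnil : Group.IsNilpotent Γ)
    {p : ℕ} (hp : p.Prime) {a : Γ} (ha : ∃ i, orderOf a = p ^ i) :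
    ∀ (n : ℕ) (v : Γ), orderOf v = n → ¬ p ∣ n → Commute a v := by
  intro n
  induction n using Nat.strong_induction_on with
  | _ n ih =>
    intro v hv hpn
    rcases eq_or_ne n 1 with rfl | hn1
    · have : v = 1 := orderOf_eq_one_iff.mp hv
      rw [this]; exact Commute.one_right a
    have hn0 : n ≠ 0 := by rintro rfl; exact (orderOf_pos v).ne' hv
    set q := n.minFac with hqdef
    have hq : q.Prime := Nat.minFac_prime hn1
    have hqn : q ∣ n := Nat.minFac_dvd n
    have hqp : p ≠ q := by
      rintro rfl
      exact hpn hqn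
    obtain ⟨u, w, huw, hu_mem, hw_mem, hu_ord, hw_ord⟩ := exists_primary_decomp v hq
    rw [hv] at hu_ord hw_ord
    have hcau : Commute a u := by
      obtain ⟨j, hj, hju⟩ := (Nat.dvd_prime_pow hq).mp hu_ord
      exact commute_of_prime_pow_orders hnil hp hq hqp ha ⟨j, hju⟩
    have hsq : 1 ≤ n.factorization q := (hq.factorization_pos_of_dvd hn0 hqn)
    have hmlt : n / q ^ n.factorization q < n := by
      have heq := Nat.ordProj_mul_ordCompl_eq_self n q
      have hm_pos := Nat.ordCompl_pos q hn0
      have hq2 : 2 ≤ q ^ n.factorization q := le_trans hq.two_le (Nat.le_self_pow (by omega) q)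
      nlinarith [heq, hm_pos, hq2]
    have hcaw : Commute a w := by
      refine ih (orderOf w)
        (lt_of_le_of_lt (Nat.le_of_dvd (Nat.ordCompl_pos q hn0) hw_ord) hmlt) w rfl ?_
      intro hpw
      exact hpn ((dvd_trans hpw hw_ord).trans (Nat.ordCompl_dvd n q))
    rw [huw]
    exact Commute.mul_right hcau hcaw
variable {H : Type*} [Group H]

lemma isSolvable_of_all_subgroups_trivial
    (h : ∀ X : Subgroup H, X = ⊥ ∨ X = ⊤) : IsSolvable H := by
  have hcyc : IsCyclic H := by
    by_cases hex : ∃ g : H, g ≠ 1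
    · obtain ⟨g, hg⟩ := hex
      rcases h (zpowers g) with hb | ht
      · exact absurd (by rwa [zpowers_eq_bot] at hb) hg
      · exact ⟨⟨g, fun z => show z ∈ zpowers g by rw [ht]; trivial⟩⟩
    · push_neg at hex
      exact ⟨⟨1, fun z => show z ∈ zpowers (1 : H) by rw [hex z]; exact mem_zpowers 1⟩⟩
  letI := hcyc.commGroup
  exact isSolvable_of_comm fun a b => mul_comm a b

lemma quotient_solvable_of_coatom {P : Subgroup H} [P.Normal] (h : IsCoatom P) :
    IsSolvable (H ⧸ P) := by
  apply isSolvable_of_all_subgroups_trivial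
  intro X
  have hker : P ≤ Subgroup.comap (QuotientGroup.mk' P) X := by
    intro g hg
    have : QuotientGroup.mk' P g = 1 := by
      rw [← MonoidHom.mem_ker, QuotientGroup.ker_mk']; exact hg
    rw [Subgroup.mem_comap, this]; exact one_mem X
  rcases hker.lt_or_eq with hlt | heq
  · right
    have := h.2 _ hlt
    rw [← Subgroup.map_comap_eq_self_of_surjective (f := QuotientGroup.mk' P)
      QuotientGroup.mk_surjective X, this]
    exact Subgroup.map_top_of_surjective _ QuotientGroup.mk_surjective
  · left
    rw [← Subgroup.map_comap_eq_self_of_surjective (f := QuotientGroup.mk' P)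
      QuotientGroup.mk_surjective X, ← heq]
    rw [Subgroup.map_eq_bot_iff, QuotientGroup.ker_mk']

lemma endgame {H : Type*} [Group H] [Finite H] (hH : ¬ IsSolvable H)
    {p k : ℕ} [Fact p.Prime] (hk1 : 1 ≤ k) (hk2 : k ≤ 2)
    (P : Sylow p H) (hPcard : Nat.card (P : Subgroup H) = p ^ k)
    (hmax : IsCoatom (P : Subgroup H)) : False := by
  classical
  have hp : p.Prime := Fact.out
  have hcomm : ∀ a b : (P : Subgroup H), a * b = b * a := by
    interval_cases k
    · haveI : IsCyclic (P : Subgroup H) := isCyclic_of_prime_card (p := p) (by rwa [pow_one] at hPcard)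
      letI : CommGroup (P : Subgroup H) := IsCyclic.commGroup
      exact fun a b => mul_comm a b
    · exact IsPGroup.commutative_of_card_eq_prime_sq hPcard
  have hsolvP : IsSolvable (P : Subgroup H) := isSolvable_of_comm hcomm
  rcases (le_normalizer (H := (P : Subgroup H))).lt_or_eq with hlt | heq
  · have htop := hmax.2 _ hlt
    haveI : (P : Subgroup H).Normal := Subgroup.normalizer_eq_top_iff.mp htop
    exact hH (isSolvable_of_normal_of_quotient hsolvP (quotient_solvable_of_coatom hmax))
  · have hPC : Subgroup.normalizer ((P : Subgroup H) : Set H) ≤ Subgroup.centralizer (P : Set H) := by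
      rw [← heq]
      intro g hg
      rw [Subgroup.mem_centralizer_iff]
      intro h hh
      exact congrArg Subtype.val (hcomm ⟨h, hh⟩ ⟨g, hg⟩)
    haveI : (P : Subgroup H).FiniteIndex := ⟨Subgroup.index_ne_zero_of_finite⟩
    set K := (MonoidHom.transferSylow P hPC).ker with hKdef
    have hcompl : Subgroup.IsComplement' K (P : Subgroup H) :=
      MonoidHom.ker_transferSylow_isComplement' P hPC
    have hcardmul : Nat.card K * Nat.card (P : Subgroup H) = Nat.card H := hcompl.card_mul
    have hpK : ¬ p ∣ Nat.card K := MonoidHom.not_dvd_card_ker_transferSylow P hPC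
    have hKbot : K ≠ ⊥ := by
      intro hbot
      rw [hbot, Subgroup.card_bot, one_mul] at hcardmul
      have hpg : IsPGroup p H := IsPGroup.of_card (by rw [← hcardmul]; exact hPcard)
      haveI := hpg.isNilpotent
      exact hH (inferInstance : Group.IsSolvable H)
    have hK1 : Nat.card K ≠ 1 := fun h1 => hKbot (Subgroup.card_eq_one.mp h1)
    obtain ⟨q, hq, hqK, hqp⟩ : ∃ q : ℕ, q.Prime ∧ q ∣ Nat.card K ∧ q ≠ p := by
      refine ⟨(Nat.card K).minFac, Nat.minFac_prime hK1, Nat.minFac_dvd _, ?_⟩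
      intro hqp
      exact hpK (hqp ▸ Nat.minFac_dvd _)
    haveI : Fact q.Prime := ⟨hq⟩
    -- action of P on Sylow q K via conjugation
    letI actP : MulAction (P : Subgroup H) (Sylow q K) :=
      MulAction.compHom _ ((MulAut.conjNormal (G := H) (H := K)).comp (P : Subgroup H).subtype)
    have hfix : ∃ Q : Sylow q K, ∀ g : (P : Subgroup H), g • Q = Q := by
      obtain ⟨Q⟩ := (Sylow.nonempty : Nonempty (Sylow q K))
      have hdvd1 : Nat.card (Sylow q K) ∣ Nat.card K :=
        dvd_trans (Sylow.card_dvd_index Q) (Subgroup.index_dvd_card _)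
      have hnd : ¬ p ∣ Nat.card (Sylow q K) := fun hdd => hpK (hdd.trans hdvd1)
      obtain ⟨Q₀, hQ₀⟩ := P.isPGroup'.nonempty_fixed_point_of_prime_not_dvd_card (Sylow q K) hnd
      exact ⟨Q₀, fun g => hQ₀ g⟩
    obtain ⟨Q₀, hQ₀⟩ := hfix
    set Qm := Subgroup.map K.subtype (Q₀ : Subgroup K) with hQmdef
    have hQmK : Qm ≤ K := Subgroup.map_subtype_le _
    have hQmcard : Nat.card Qm = Nat.card (Q₀ : Subgroup K) :=
      (Nat.card_congr
        (Subgroup.equivMapOfInjective (Q₀ : Subgroup K) K.subtype K.subtype_injective).toEquiv).symm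
    have hq_dvd_Qm : q ∣ Nat.card Qm := by
      rw [hQmcard, Q₀.card_eq_multiplicity]
      exact dvd_pow_self q (hq.factorization_pos_of_dvd Nat.card_pos.ne' hqK).ne'
    -- P normalizes Qm
    have hfwd : ∀ g ∈ (P : Subgroup H), ∀ h ∈ Qm, g * h * g⁻¹ ∈ Qm := by
      intro g hg h hh
      obtain ⟨kk, hkk, rfl⟩ := hh
      have hsm : (⟨g, hg⟩ : (P : Subgroup H)) • Q₀ = Q₀ := hQ₀ ⟨g, hg⟩
      have hsub : (MulAut.conjNormal (G := H) (H := K) g) • (Q₀ : Subgroup K)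
          = (Q₀ : Subgroup K) := congrArg Sylow.toSubgroup hsm
      have hmem : (MulAut.conjNormal (G := H) (H := K) g) kk ∈ (Q₀ : Subgroup K) := by
        rw [← hsub]
        exact Subgroup.smul_mem_pointwise_smul kk _ _ hkk
      exact ⟨_, hmem, rfl⟩
    have hPn : (P : Subgroup H) ≤ Subgroup.normalizer (Qm : Set H) := by
      intro g hg
      rw [Subgroup.mem_normalizer_iff]
      intro h
      constructor
      · exact fun hh => hfwd g hg h hh
      · intro hh
        have := hfwd g⁻¹ (inv_mem hg) _ hh
        have heq2 : g⁻¹ * (g * h * g⁻¹) * g⁻¹⁻¹ = h := by group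
        rwa [heq2] at this
    have hnot_le : ¬ Qm ≤ (P : Subgroup H) := by
      intro hle
      have hdq : q ∣ p ^ k := dvd_trans hq_dvd_Qm
        (by rw [← hPcard]; exact Subgroup.card_dvd_of_le hle)
      exact hqp ((Nat.prime_dvd_prime_iff_eq hq hp).mp (hq.dvd_of_dvd_pow hdq))
    have hWn : Subgroup.normalizer (Qm : Set H) = ⊤ := by
      rcases hPn.lt_or_eq with hlt2 | heq2
      · exact hmax.2 _ hlt2
      · exact absurd (le_trans Subgroup.le_normalizer heq2.symm.le) hnot_le
    haveI : Qm.Normal := Subgroup.normalizer_eq_top_iff.mp hWn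
    have hsupP : Qm ⊔ (P : Subgroup H) = ⊤ := by
      have hlt2 : (P : Subgroup H) < Qm ⊔ (P : Subgroup H) := by
        rcases (le_sup_right : (P : Subgroup H) ≤ Qm ⊔ (P : Subgroup H)).lt_or_eq with h1 | h1
        · exact h1
        · exact absurd (h1 ▸ le_sup_left) hnot_le
      exact hmax.2 _ hlt2
    have hcard_le : Nat.card H ≤ Nat.card Qm * Nat.card (P : Subgroup H) := by
      have h1 : ((Qm ⊔ (P : Subgroup H) : Subgroup H) : Set H)
          = (Qm : Set H) * ((P : Subgroup H) : Set H) := Subgroup.normal_mul Qm (P : Subgroup H)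
      calc Nat.card H = Nat.card (Qm ⊔ (P : Subgroup H) : Subgroup H) := by
            rw [hsupP, Subgroup.card_top]
        _ = Nat.card ((Qm : Set H) * ((P : Subgroup H) : Set H) : Set H) := by
            rw [← h1]; rfl
        _ ≤ Nat.card (Qm : Set H) * Nat.card ((P : Subgroup H) : Set H) := Set.natCard_mul_le
        _ = Nat.card Qm * Nat.card (P : Subgroup H) := rfl
    have hKQ : Nat.card K ≤ Nat.card Qm := by
      have hp0 : 0 < Nat.card (P : Subgroup H) := Nat.card_pos
      have := hcardmul ▸ hcard_le
      exact Nat.le_of_mul_le_mul_right this hp0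
    have hQmK_eq : Qm = K := subgroup_eq_of_le_of_card_le hQmK hKQ
    have hKq : IsPGroup q K := by
      rw [← hQmK_eq]
      exact Q₀.isPGroup'.map K.subtype
    haveI := hKq.isNilpotent
    have hsolvK : IsSolvable K := (inferInstance : Group.IsSolvable K)
    have hsolvQ : IsSolvable (H ⧸ K) := by
      have hidx : Nat.card (H ⧸ K) = p ^ k := by
        have h2 : Nat.card K * K.index = Nat.card H := Subgroup.card_mul_index K
        have h3 : 0 < Nat.card K := Nat.card_pos
        have h4 : K.index = Nat.card (H ⧸ K) := Subgroup.index_eq_card K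
        rw [← hcardmul, hPcard] at h2
        have h5 := Nat.eq_of_mul_eq_mul_left h3 h2
        rw [← h4, h5]
      have hpg : IsPGroup p (H ⧸ K) := IsPGroup.of_card hidx
      haveI := hpg.isNilpotent
      exact (inferInstance : Group.IsSolvable (H ⧸ K))
    exact hH (isSolvable_of_normal_of_quotient hsolvK hsolvQ)

lemma sylow_normal_of_isNilpotent {Γ : Type*} [Group Γ] [Finite Γ]
    (hnil : Group.IsNilpotent Γ) {r : ℕ} (hr : r.Prime) (A : Sylow r Γ) :
    (A : Subgroup Γ).Normal := by
  have h := ((isNilpotent_of_finite_tfae (G := Γ)).out 0 3).mp hnil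
  exact h r ⟨hr⟩ A

lemma isNilpotent_closure_pair_of_commute {x y : H} (h : Commute x y) :
    Group.IsNilpotent (closure ({x, y} : Set H)) := by
  have hgen : ∀ g ∈ closure ({x, y} : Set H), Commute x g ∧ Commute y g := by
    intro g hg
    induction hg using closure_induction with
    | mem z hz =>
      rcases hz with rfl | rfl
      exacts [⟨Commute.refl _, h.symm⟩, ⟨h, Commute.refl _⟩]
    | one => exact ⟨Commute.one_right _, Commute.one_right _⟩
    | mul a b _ _ ha hb => exact ⟨ha.1.mul_right hb.1, ha.2.mul_right hb.2⟩
    | inv a _ ha => exact ⟨ha.1.inv_right, ha.2.inv_right⟩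
  have hcomm : ∀ a ∈ closure ({x, y} : Set H), ∀ b ∈ closure ({x, y} : Set H),
      Commute a b := by
    intro a ha
    induction ha using closure_induction with
    | mem z hz =>
      intro b hb
      rcases hz with rfl | rfl
      · exact (hgen b hb).1
      · exact (hgen b hb).2
    | one => exact fun b _ => Commute.one_left b
    | mul c d _ _ hc hd => exact fun b hb => (hc b hb).mul_left (hd b hb)
    | inv c _ hc => exact fun b hb => (hc b hb).inv_left
  refine ⟨1, ?_⟩
  rw [Subgroup.upperCentralSeries_one, eq_top_iff]
  rintro ⟨g, hg⟩ _
  rw [Subgroup.mem_center_iff]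
  rintro ⟨z, hz⟩
  exact Subtype.ext (hcomm z hz g hg)

lemma centralizer_subset_nilpotentizer (x : H) :
    (Subgroup.centralizer {x} : Set H) ⊆ nilpotentizer x := by
  intro y hy
  have hcomm : Commute x y := Subgroup.mem_centralizer_iff.mp hy x rfl
  exact isNilpotent_closure_pair_of_commute hcomm


end AuxAll

lemma small_case {H : Type*} [Group H] [Finite H] (hH : ¬ IsSolvable H) (x : H)
    (hmax : IsCoatom (Subgroup.closure (nilpotentizer x)))
    {p k : ℕ} (hp : p.Prime) (hk : k ≤ 2)
    (hcard : Nat.card (nilpotentizer x) = p ^ k) : False := by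
  haveI : Fact p.Prime := ⟨hp⟩
  have hx1 : x ≠ 1 := by
    rintro rfl
    rw [nilpotentizer_one, Subgroup.closure_univ] at hmax
    exact hmax.1 rfl
  have hdvd : Nat.card (zpowers x) ∣ p ^ k := by
    rw [← hcard]
    exact card_dvd_of_mul_closed (zpowers x) (nilpotentizer x)
      (fun y hy t ht => mul_mem_nilpotentizer hy ht)
  obtain ⟨j, hjk, hxcard⟩ := (Nat.dvd_prime_pow hp).mp hdvd
  have hj1 : 1 ≤ j := by
    rcases Nat.eq_zero_or_pos j with rfl | hpos
    · rw [pow_zero] at hxcard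
      exact absurd (by rwa [Subgroup.card_eq_one, zpowers_eq_bot] at hxcard) hx1
    · exact hpos
  have hxp : IsPGroup p (zpowers x) := IsPGroup.of_card hxcard
  obtain ⟨P, hP⟩ := hxp.exists_le_sylow
  have hxP : x ∈ (P : Subgroup H) := hP (mem_zpowers x)
  have hPsub : ((P : Subgroup H) : Set H) ⊆ nilpotentizer x :=
    coe_subset_nilpotentizer hxP P.isPGroup'.isNilpotent
  obtain ⟨a, hacard⟩ := IsPGroup.iff_card.mp P.isPGroup'
  have hcard_le : Nat.card (P : Subgroup H) ≤ Nat.card (nilpotentizer x) := by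
    calc Nat.card (P : Subgroup H) = ((P : Subgroup H) : Set H).ncard :=
          Nat.card_coe_set_eq _
      _ ≤ (nilpotentizer x).ncard := Set.ncard_le_ncard hPsub (Set.toFinite _)
      _ = Nat.card (nilpotentizer x) := (Nat.card_coe_set_eq _).symm
  have hja : j ≤ a := by
    have hd2 : p ^ j ∣ p ^ a := by
      rw [← hxcard, ← hacard]; exact Subgroup.card_dvd_of_le hP
    exact (Nat.pow_dvd_pow_iff_le_right hp.one_lt).mp hd2
  have hak : a ≤ k := by
    have hle : p ^ a ≤ p ^ k := by rw [← hacard, ← hcard]; exact hcard_le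
    exact (Nat.pow_le_pow_iff_right hp.one_lt).mp hle
  rcases eq_or_lt_of_le hak with haeq | halt
  · -- nil = P : endgame
    have hset : nilpotentizer x = ((P : Subgroup H) : Set H) := by
      symm
      apply Set.eq_of_subset_of_ncard_le hPsub ?_ (Set.toFinite _)
      have e1 : (nilpotentizer x).ncard = p ^ k := by
        rw [← Nat.card_coe_set_eq]; exact hcard
      have e2 : ((P : Subgroup H) : Set H).ncard = p ^ k := by
        rw [← Nat.card_coe_set_eq]
        calc Nat.card ((P : Subgroup H) : Set H) = Nat.card (P : Subgroup H) := rfl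
          _ = p ^ k := by rw [hacard, haeq]
      omega
    have hmax' : IsCoatom ((P : Subgroup H)) := by
      rw [hset, Subgroup.closure_eq] at hmax; exact hmax
    exact endgame hH (le_trans hj1 hjk) hk P (by rw [hacard, haeq]) hmax'
  · have hk2 : k = 2 := by omega
    have ha1 : a = 1 := by omega
    have hj1' : j = 1 := by omega
    have hordx : orderOf x = p := by
      rw [← Nat.card_zpowers, hxcard, hj1', pow_one]
    have hnilC : nilpotentizer x ⊆ (Subgroup.centralizer {x} : Set H) := by
      intro y hy
      have hKnil : Group.IsNilpotent (closure ({x, y} : Set H)) := hy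
      have hxK : x ∈ closure ({x, y} : Set H) := subset_closure (Set.mem_insert _ _)
      have hyK : y ∈ closure ({x, y} : Set H) :=
        subset_closure (Set.mem_insert_iff.mpr (Or.inr rfl))
      set Kxy := closure ({x, y} : Set H) with hKxydef
      obtain ⟨u, w, huw, hu_mem, hw_mem, hu_ord, hw_ord⟩ :=
        exists_primary_decomp (⟨y, hyK⟩ : Kxy) hp
      have horda : orderOf (⟨x, hxK⟩ : Kxy) = p := by
        rw [Subgroup.orderOf_mk, hordx]
      have hcomm_aw : Commute (⟨x, hxK⟩ : Kxy) w := by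
        refine commute_of_pgroup_coprime hKnil hp ⟨1, by rw [horda, pow_one]⟩
          (orderOf w) w rfl ?_
        intro hpd
        exact Nat.not_dvd_ordCompl hp (orderOf_pos (⟨y, hyK⟩ : Kxy)).ne'
          (hpd.trans hw_ord)
      have hcomm_au : Commute x (u : H) := by
        obtain ⟨t, _, hut⟩ := (Nat.dvd_prime_pow hp).mp hu_ord
        have hup : IsPGroup p (zpowers u) := IsPGroup.of_card (by rw [Nat.card_zpowers, hut])
        obtain ⟨A, hA⟩ := hup.exists_le_sylow
        haveI hAn : (A : Subgroup Kxy).Normal := sylow_normal_of_isNilpotent hKnil hp A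
        have hxA : (⟨x, hxK⟩ : Kxy) ∈ (A : Subgroup Kxy) := by
          have hxp2 : IsPGroup p (zpowers (⟨x, hxK⟩ : Kxy)) :=
            IsPGroup.of_card (by rw [Nat.card_zpowers, horda, pow_one])
          obtain ⟨A', hA'⟩ := hxp2.exists_le_sylow
          haveI := Sylow.unique_of_normal A hAn
          rw [Subsingleton.elim A' A] at hA'
          exact hA' (mem_zpowers _)
        have huA : u ∈ (A : Subgroup Kxy) := hA (mem_zpowers u)
        have hAmp : IsPGroup p (Subgroup.map Kxy.subtype (A : Subgroup Kxy)) :=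
          A.isPGroup'.map _
        obtain ⟨S, hS⟩ := hAmp.exists_le_sylow
        have hxS : x ∈ (S : Subgroup H) := hS ⟨⟨x, hxK⟩, hxA, rfl⟩
        have hcardS : Nat.card (S : Subgroup H) = p := by
          rw [S.card_eq_multiplicity, ← P.card_eq_multiplicity, hacard, ha1, pow_one]
        have hzSeq : zpowers x = (S : Subgroup H) :=
          subgroup_eq_of_le_of_card_le (zpowers_le.mpr hxS)
            (by rw [hcardS, hxcard, hj1', pow_one])
        have huS : (u : H) ∈ zpowers x := by
          rw [hzSeq]
          exact hS ⟨u, huA, rfl⟩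
        obtain ⟨i, hi⟩ := huS
        rw [← hi]
        exact Commute.zpow_right (Commute.refl x) i
      have hyeq : y = (u : H) * (w : H) := by
        have h8 : ((⟨y, hyK⟩ : Kxy) : H) = ((u * w : Kxy) : H) := congrArg Subtype.val huw
        simpa using h8
      have hcomm_aw' : Commute x (w : H) := by
        have h9 := congrArg Subtype.val hcomm_aw
        simp at h9; exact h9
      have hcxy : Commute x y := by rw [hyeq]; exact hcomm_au.mul_right hcomm_aw'
      rw [SetLike.mem_coe, Subgroup.mem_centralizer_iff]
      intro h hh
      rw [Set.mem_singleton_iff] at hh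
      subst hh
      exact hcxy
    have hCeq : (Subgroup.centralizer ({x} : Set H) : Set H) = nilpotentizer x :=
      subset_antisymm (centralizer_subset_nilpotentizer x) hnilC
    have hCcard : Nat.card (Subgroup.centralizer ({x} : Set H)) = p ^ 2 := by
      have h10 : Nat.card (Subgroup.centralizer ({x} : Set H))
          = Nat.card (nilpotentizer x) := by
        rw [← hCeq]
        simp [SetLike.coe_sort_coe]
      rw [h10, hcard, hk2]
    have hdvd2 : p ^ 2 ∣ Nat.card H := by
      rw [← hCcard]; exact Subgroup.card_subgroup_dvd_card _
    have hfact : (Nat.card H).factorization p = 1 := by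
      have h5 : p ^ a = p ^ ((Nat.card H).factorization p) := by
        rw [← hacard]; exact P.card_eq_multiplicity
      have h6 := Nat.pow_right_injective hp.two_le h5
      omega
    have h6 : 2 ≤ (Nat.card H).factorization p :=
      (Nat.Prime.pow_dvd_iff_le_factorization hp Nat.card_pos.ne').mp hdvd2
    omega

theorem stmt_15 {G : Type*} [Group G] [Finite G] (hG : ¬ IsSolvable G) (x : G)
    (hmax : IsCoatom (Subgroup.closure (nilpotentizer x)))
    (hZ : hypercenter G ≠ ⊥)
    (hZM : hypercenter G ≤ Subgroup.closure (nilpotentizer x)) :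
    ∀ p : ℕ, p.Prime → Nat.card (nilpotentizer x) ≠ p ^ 3 := by
  intro p hp hc3
  haveI : Fact p.Prime := ⟨hp⟩
  have hcne : Subgroup.center G ≠ ⊥ := center_ne_bot_of_hypercenter hZ
  have hcM : Subgroup.center G ≤ Subgroup.closure (nilpotentizer x) :=
    le_trans center_le_hypercenter hZM
  have hpre := nilpotentizer_preimage_center x
  have hcardeq : Nat.card (nilpotentizer x)
      = Nat.card (Subgroup.center G)
        * Nat.card (nilpotentizer (QuotientGroup.mk (s := Subgroup.center G) x)) := by
    conv_lhs => rw [← hpre]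
    rw [Nat.card_congr (QuotientGroup.preimageMkEquivSubgroupProdSet (Subgroup.center G) _),
      Nat.card_prod]
  have hGq : ¬ IsSolvable (G ⧸ Subgroup.center G) := by
    intro hsol
    exact hG (isSolvable_of_normal_of_quotient (Group.isSolvable_of_comm (G := Subgroup.center G) fun a b =>
      Subtype.ext (Subgroup.mem_center_iff.mp b.2 a.1)) hsol)
  have hclosure : Subgroup.closure (nilpotentizer (QuotientGroup.mk (s := Subgroup.center G) x))
      = Subgroup.map (QuotientGroup.mk' (Subgroup.center G))
          (Subgroup.closure (nilpotentizer x)) := by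
    rw [MonoidHom.map_closure, ← nilpotentizer_image_center]
    rfl
  have hmax' : IsCoatom
      (Subgroup.closure (nilpotentizer (QuotientGroup.mk (s := Subgroup.center G) x))) := by
    rw [hclosure]
    exact isCoatom_map_quotient hcM hmax
  have h7 : Nat.card (Subgroup.center G)
      * Nat.card (nilpotentizer (QuotientGroup.mk (s := Subgroup.center G) x)) = p ^ 3 := by
    rw [← hcardeq]; exact hc3
  obtain ⟨e, he3, hNe⟩ := (Nat.dvd_prime_pow hp).mp (Dvd.intro _ h7)
  obtain ⟨k, hk3, hkc⟩ := (Nat.dvd_prime_pow hp).mp (Dvd.intro_left _ h7)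
  have he1 : 1 ≤ e := by
    rcases Nat.eq_zero_or_pos e with rfl | h
    · rw [pow_zero] at hNe
      exact absurd (Subgroup.card_eq_one.mp hNe) hcne
    · exact h
  have hek : e + k = 3 := by
    have h8 : p ^ (e + k) = p ^ 3 := by rw [pow_add, ← hNe, ← hkc, h7]
    exact Nat.pow_right_injective hp.two_le h8
  exact small_case hGq _ hmax' hp (by omega) hkc
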